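/- Let T be a rooted tree (DFS tree) with root u, where each vertex v is assigned a nonnegative weight charge(v), and w(v) denotes the sum of charge over descendants of v (including v). If the total sum of charges is exactly 2Δ+1, then the set of vertices v with w(v) ≥ Δ+1 forms a path in T starting at the root. -/
import Mathlib


open Classical

/-- `a` is an ancestor of `b` in the tree given by the parent map (every vertex is
an ancestor of itself). -/
def IsAncestor {V : Type*} (parent : V → V) (a b : V) : Prop :=
  ∃ n : ℕ, parent^[n] b = a

theorem stmt2 {V : Type*} [Fintype V] (parent : V → V) (u : V)
    (charge : V → ℕ) (Δ : ℕ) (w : V → ℕ)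
    (hroot : parent u = u)
    (htree : ∀ v : V, IsAncestor parent u v)
    (hw : ∀ v : V, w v = ∑ x ∈ Finset.univ.filter (fun x => IsAncestor parent v x), charge x)
    (htotal : ∑ x : V, charge x = 2 * Δ + 1) :
    Δ + 1 ≤ w u ∧
      ∀ v₁ v₂ : V, Δ + 1 ≤ w v₁ → Δ + 1 ≤ w v₂ →
        IsAncestor parent v₁ v₂ ∨ IsAncestor parent v₂ v₁ := by
  constructor
  · have huniv : Finset.univ.filter (fun x => IsAncestor parent u x) = Finset.univ := by
      ext x; simp [htree x]
    rw [hw u, huniv, htotal]; omega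
  · intro v₁ v₂ h1 h2
    by_contra hc
    push_neg at hc
    obtain ⟨hc1, hc2⟩ := hc
    have hdisj : Disjoint (Finset.univ.filter (fun x => IsAncestor parent v₁ x))
        (Finset.univ.filter (fun x => IsAncestor parent v₂ x)) := by
      rw [Finset.disjoint_left]
      intro x hx1 hx2
      simp only [Finset.mem_filter] at hx1 hx2
      obtain ⟨n, hn⟩ := hx1.2
      obtain ⟨m, hm⟩ := hx2.2
      rcases le_total n m with h | h
      · exact hc2 ⟨m - n, by
          rw [← hn, ← Function.iterate_add_apply, Nat.sub_add_cancel h]; exact hm⟩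
      · exact hc1 ⟨n - m, by
          rw [← hm, ← Function.iterate_add_apply, Nat.sub_add_cancel h]; exact hn⟩
    have hle : ∑ x ∈ (Finset.univ.filter (fun x => IsAncestor parent v₁ x) ∪
        Finset.univ.filter (fun x => IsAncestor parent v₂ x)), charge x ≤ ∑ x : V, charge x :=
      Finset.sum_le_sum_of_subset (Finset.subset_univ _)
    rw [Finset.sum_union hdisj, htotal] at hle
    rw [hw v₁] at h1
    rw [hw v₂] at h2
    omega
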